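/- For every real M > −1/(3√3), define on (t₊(M), ∞): β̂_M(t) = (1/3)(3/2 − √(W_M(t))/t − W_M'(t)/(4√(W_M(t)))) and θ̂_M(t) = √3·t·(W_M'(t) − 2√(W_M(t)))/(4W_M(t) + t·W_M'(t) − 6t·√(W_M(t))). Then lim_{t→t₊(M)⁺} θ̂_M(t) = √3, lim_{t→∞} θ̂_M(t) = −√3, lim_{t→t₊(M)⁺} β̂_M(t) = −∞, and lim_{t→∞} β̂_M(t) = 0. (In the (θ, α) plane with α = 1/β, the orbit of the explicit exterior solution runs from the singular point at θ = −√3 to the critical point (√3, 0) at the null boundary.) -/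

import Mathlib

noncomputable def Whp (M t : ℝ) : ℝ := t ^ 2 - 1 - 2 * M / t

noncomputable def Whp' (M t : ℝ) : ℝ := 2 * t + 2 * M / t ^ 2

/-- `β̂_M`, the renormalized self-similar quantity of the explicit cone-exterior
(Wick-rotated) solution. -/
noncomputable def betaW (M t : ℝ) : ℝ :=
  (1 / 3) * (3 / 2 - Real.sqrt (Whp M t) / t - Whp' M t / (4 * Real.sqrt (Whp M t)))

/-- `θ̂_M`, the renormalized self-similar quantity of the explicit cone-exterior
(Wick-rotated) solution. -/
noncomputable def thetaW (M t : ℝ) : ℝ :=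
  Real.sqrt 3 * t * (Whp' M t - 2 * Real.sqrt (Whp M t)) /
    (4 * Whp M t + t * Whp' M t - 6 * t * Real.sqrt (Whp M t))

open Filter Topology

lemma cubic_pos_large (M T : ℝ) (hT : |2*M| + 2 ≤ T) : 0 < T^3 - T - 2*M := by
  have h1 : 2*M ≤ |2*M| := le_abs_self _
  have h2 : (2:ℝ) ≤ T := le_trans (by linarith [abs_nonneg (2*M)]) hT
  nlinarith [mul_nonneg (mul_nonneg (by linarith : (0:ℝ) ≤ T - 2) (by linarith : (0:ℝ) ≤ T))
    (by linarith : (0:ℝ) ≤ T)]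

lemma cubic_cont (M : ℝ) : Continuous (fun s : ℝ => s ^ 3 - s - 2 * M) := by fun_prop

lemma tp_gt (M : ℝ) (hM : -1 / (3 * Real.sqrt 3) < M) (tp : ℝ)
    (htp : IsGreatest {s : ℝ | s ^ 3 - s - 2 * M = 0} tp) :
    1 / Real.sqrt 3 < tp := by
  have h3 : (0:ℝ) < Real.sqrt 3 := Real.sqrt_pos.2 (by norm_num)
  have hs3 : Real.sqrt 3 ^ 2 = 3 := Real.sq_sqrt (by norm_num)
  set a : ℝ := 1 / Real.sqrt 3 with ha_def
  have ha : 0 < a := by positivity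
  have ha2 : a ^ 2 = 1/3 := by rw [ha_def, div_pow, hs3]; norm_num
  have hMa : -(a/3) < M := by
    rw [ha_def]
    have h : -1 / (3 * Real.sqrt 3) = -(1 / Real.sqrt 3 / 3) := by field_simp
    linarith [h ▸ hM]
  have hga : a^3 - a - 2*M < 0 := by nlinarith [ha2, hMa, ha]
  set T : ℝ := max a (|2*M| + 2) with hT_def
  have hgT : 0 < T^3 - T - 2*M := cubic_pos_large M T (le_max_right _ _)
  obtain ⟨c, hc, hfc⟩ := intermediate_value_Icc (le_max_left a _) (cubic_cont M).continuousOn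
    (show (0:ℝ) ∈ Set.Icc _ _ from ⟨hga.le, hgT.le⟩)
  have hctp : c ≤ tp := htp.2 hfc
  have hca : a ≤ c := hc.1
  have hne : a ≠ c := by
    intro h
    rw [← h] at hfc
    simp only at hfc
    linarith
  have : a < c := lt_of_le_of_ne hca hne
  linarith

lemma cubic_pos_of_gt (M tp : ℝ) (htp : IsGreatest {s : ℝ | s ^ 3 - s - 2 * M = 0} tp)
    (t : ℝ) (ht : tp < t) : 0 < t^3 - t - 2*M := by
  by_contra h
  push_neg at h
  set T : ℝ := max t (|2*M| + 2) with hT_def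
  have hgT : 0 < T^3 - T - 2*M := cubic_pos_large M T (le_max_right _ _)
  obtain ⟨c, hc, hfc⟩ := intermediate_value_Icc (le_max_left t _) (cubic_cont M).continuousOn
    (show (0:ℝ) ∈ Set.Icc _ _ from ⟨h, hgT.le⟩)
  have := htp.2 hfc
  have := hc.1
  linarith

/-- For every `M > −1/(3√3)`:
`θ̂_M(t) → √3` as `t → t₊(M)⁺`, `θ̂_M(t) → −√3` as `t → ∞`,
`β̂_M(t) → −∞` as `t → t₊(M)⁺`, and `β̂_M(t) → 0` as `t → ∞`. -/
theorem explicit_solution_limits (M : ℝ) (hM : -1 / (3 * Real.sqrt 3) < M) (tp : ℝ)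
    (htp : IsGreatest {s : ℝ | s ^ 3 - s - 2 * M = 0} tp) :
    Filter.Tendsto (fun t : ℝ => thetaW M t) (nhdsWithin tp (Set.Ioi tp))
      (nhds (Real.sqrt 3)) ∧
    Filter.Tendsto (fun t : ℝ => thetaW M t) Filter.atTop (nhds (-Real.sqrt 3)) ∧
    Filter.Tendsto (fun t : ℝ => betaW M t) (nhdsWithin tp (Set.Ioi tp))
      Filter.atBot ∧
    Filter.Tendsto (fun t : ℝ => betaW M t) Filter.atTop (nhds 0) := by
  have h3 : (0:ℝ) < Real.sqrt 3 := Real.sqrt_pos.2 (by norm_num)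
  have hs3 : Real.sqrt 3 ^ 2 = 3 := Real.sq_sqrt (by norm_num)
  have hta : 1 / Real.sqrt 3 < tp := tp_gt M hM tp htp
  have htp0 : 0 < tp := lt_trans (by positivity) hta
  have hroot : tp ^ 3 - tp - 2 * M = 0 := htp.1
  have hW0 : Whp M tp = 0 := by
    unfold Whp; field_simp; linear_combination hroot
  have htp2 : 1/3 < tp^2 := by
    have h : (1/Real.sqrt 3)^2 = 1/3 := by rw [div_pow, hs3]; norm_num
    nlinarith [mul_lt_mul'' hta hta (by positivity) (by positivity), h]
  have hc : 0 < Whp' M tp := by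
    unfold Whp'
    have h2M : 2*M = tp^3 - tp := by linarith
    rw [h2M]
    have h : 2*tp + (tp^3-tp)/tp^2 = (3*tp^2 - 1)/tp := by field_simp; ring
    rw [h]
    exact div_pos (by nlinarith) htp0
  have hWpos : ∀ t, tp < t → 0 < Whp M t := by
    intro t ht
    have ht0 : 0 < t := lt_trans htp0 ht
    have h : Whp M t = (t^3 - t - 2*M)/t := by unfold Whp; field_simp
    rw [h]
    exact div_pos (cubic_pos_of_gt M tp htp t ht) ht0
  -- continuity at tp
  have hcW : ContinuousAt (fun t : ℝ => Whp M t) tp := by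
    unfold Whp
    exact ((continuousAt_pow tp 2).sub continuousAt_const).sub
      (continuousAt_const.div continuousAt_id htp0.ne')
  have hcW' : ContinuousAt (fun t : ℝ => Whp' M t) tp := by
    unfold Whp'
    exact (continuousAt_const.mul continuousAt_id).add
      (continuousAt_const.div (continuousAt_pow tp 2) (pow_ne_zero 2 htp0.ne'))
  have hWt : Tendsto (fun t : ℝ => Whp M t) (nhdsWithin tp (Set.Ioi tp)) (nhds 0) := by
    have := hcW.continuousWithinAt (s := Set.Ioi tp)
    rw [ContinuousWithinAt, hW0] at this
    exact this
  have hst : Tendsto (fun t : ℝ => Real.sqrt (Whp M t)) (nhdsWithin tp (Set.Ioi tp)) (nhds 0) := by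
    have := (Real.continuous_sqrt.continuousAt (x := (0:ℝ))).tendsto.comp hWt
    simpa [Function.comp_def] using this
  have hW't : Tendsto (fun t : ℝ => Whp' M t) (nhdsWithin tp (Set.Ioi tp)) (nhds (Whp' M tp)) :=
    hcW'.continuousWithinAt
  have hid : Tendsto (fun t : ℝ => t) (nhdsWithin tp (Set.Ioi tp)) (nhds tp) :=
    tendsto_id.mono_right nhdsWithin_le_nhds
  -- Part 1
  have p1 : Tendsto (fun t : ℝ => thetaW M t) (nhdsWithin tp (Set.Ioi tp)) (nhds (Real.sqrt 3)) := by
    have hnum := ((tendsto_const_nhds (x := Real.sqrt 3)).mul hid).mul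
      (hW't.sub ((tendsto_const_nhds (x := (2:ℝ))).mul hst))
    have hden := (((tendsto_const_nhds (x := (4:ℝ))).mul hWt).add (hid.mul hW't)).sub
      (((tendsto_const_nhds (x := (6:ℝ))).mul hid).mul hst)
    have hne : (4 * 0 + tp * Whp' M tp - 6 * tp * 0 : ℝ) ≠ 0 := by
      have : (4 * 0 + tp * Whp' M tp - 6 * tp * 0 : ℝ) = tp * Whp' M tp := by ring
      rw [this]
      positivity
    have key := hnum.div hden hne
    have hval : Real.sqrt 3 * tp * (Whp' M tp - 2 * 0) / (4 * 0 + tp * Whp' M tp - 6 * tp * 0)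
        = Real.sqrt 3 := by
      rw [show (4 * 0 + tp * Whp' M tp - 6 * tp * 0 : ℝ) = tp * Whp' M tp by ring,
        show Real.sqrt 3 * tp * (Whp' M tp - 2 * 0) = Real.sqrt 3 * (tp * Whp' M tp) by ring]
      rw [mul_div_assoc, div_self (by positivity), mul_one]
    rw [hval] at key
    exact key
  -- Part 3
  have p3 : Tendsto (fun t : ℝ => betaW M t) (nhdsWithin tp (Set.Ioi tp)) atBot := by
    have h4s : Tendsto (fun t : ℝ => 4 * Real.sqrt (Whp M t)) (nhdsWithin tp (Set.Ioi tp))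
        (nhdsWithin 0 (Set.Ioi 0)) := by
      rw [tendsto_nhdsWithin_iff]
      constructor
      · simpa using (tendsto_const_nhds (x := (4:ℝ))).mul hst
      · filter_upwards [self_mem_nhdsWithin] with t ht
        have hu : 0 < Real.sqrt (Whp M t) := Real.sqrt_pos.2 (hWpos t ht)
        exact Set.mem_Ioi.2 (by positivity)
    have hinv : Tendsto (fun t : ℝ => (4 * Real.sqrt (Whp M t))⁻¹)
        (nhdsWithin tp (Set.Ioi tp)) atTop := h4s.inv_tendsto_nhdsGT_zero
    have hb : Tendsto (fun t : ℝ => Whp' M t * (4 * Real.sqrt (Whp M t))⁻¹)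
        (nhdsWithin tp (Set.Ioi tp)) atTop := Filter.Tendsto.pos_mul_atTop hc hW't hinv
    have hbneg : Tendsto (fun t : ℝ => -(Whp' M t * (4 * Real.sqrt (Whp M t))⁻¹))
        (nhdsWithin tp (Set.Ioi tp)) atBot := tendsto_neg_atTop_atBot.comp hb
    have hfirst : Tendsto (fun t : ℝ => 3/2 - Real.sqrt (Whp M t)/t)
        (nhdsWithin tp (Set.Ioi tp)) (nhds (3/2 - 0/tp)) :=
      tendsto_const_nhds.sub (hst.div hid htp0.ne')
    have hinside : Tendsto
        (fun t : ℝ => 3/2 - Real.sqrt (Whp M t)/t - Whp' M t / (4 * Real.sqrt (Whp M t)))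
        (nhdsWithin tp (Set.Ioi tp)) atBot := by
      have h := Filter.Tendsto.add_atBot hfirst hbneg
      refine h.congr (fun t => ?_)
      rw [div_eq_mul_inv]; ring
    have h := Filter.Tendsto.const_mul_atBot (by norm_num : (0:ℝ) < 1/3) hinside
    exact h.congr (fun t => by simp only [betaW])
  -- atTop basics
  have hco1 : ∀ c : ℝ, Tendsto (fun t : ℝ => c/t) atTop (nhds 0) :=
    fun c => tendsto_const_nhds.div_atTop tendsto_id
  have hco : ∀ (c : ℝ) (n : ℕ), n ≠ 0 → Tendsto (fun t : ℝ => c/t^n) atTop (nhds 0) :=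
    fun c n h => tendsto_const_nhds.div_atTop (tendsto_pow_atTop h)
  have hL1 : Tendsto (fun t : ℝ => Whp M t / t^2) atTop (nhds 1) := by
    have h0 : Tendsto (fun t : ℝ => 1 - 1/t^2 - 2*M/t^3) atTop (nhds (1 - 0 - 0)) :=
      (tendsto_const_nhds.sub (hco 1 2 two_ne_zero)).sub (hco (2*M) 3 three_ne_zero)
    rw [show (1:ℝ) - 0 - 0 = 1 by norm_num] at h0
    refine h0.congr' ?_
    filter_upwards [eventually_gt_atTop (0:ℝ)] with t ht
    unfold Whp; field_simp
  have hL2 : Tendsto (fun t : ℝ => Real.sqrt (Whp M t) / t) atTop (nhds 1) := by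
    have h0 : Tendsto (fun t : ℝ => Real.sqrt (Whp M t / t^2)) atTop (nhds 1) := by
      have h := (Real.continuous_sqrt.continuousAt (x := (1:ℝ))).tendsto.comp hL1
      simpa [Function.comp_def] using h
    refine h0.congr' ?_
    filter_upwards [eventually_gt_atTop (0:ℝ), eventually_gt_atTop tp] with t ht htt
    rw [Real.sqrt_div (hWpos t htt).le, Real.sqrt_sq ht.le]
  have hL3 : Tendsto (fun t : ℝ => Whp' M t / t) atTop (nhds 2) := by
    have h0 : Tendsto (fun t : ℝ => 2 + 2*M/t^3) atTop (nhds (2 + 0)) :=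
      tendsto_const_nhds.add (hco (2*M) 3 three_ne_zero)
    rw [add_zero] at h0
    refine h0.congr' ?_
    filter_upwards [eventually_gt_atTop (0:ℝ)] with t ht
    unfold Whp'; field_simp
  -- Part 2
  have p2 : Tendsto (fun t : ℝ => thetaW M t) atTop (nhds (-Real.sqrt 3)) := by
    have hFnum : Tendsto (fun t : ℝ => 4 + 16*M/t + 4*M^2/t^4) atTop (nhds (4 + 0 + 0)) :=
      (tendsto_const_nhds.add (hco1 (16*M))).add (hco (4*M^2) 4 (by norm_num))
    have hFden : Tendsto (fun t : ℝ => Whp' M t/t + 2*(Real.sqrt (Whp M t)/t)) atTop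
        (nhds (2 + 2*1)) := hL3.add (tendsto_const_nhds.mul hL2)
    have hF : Tendsto (fun t : ℝ => Real.sqrt 3 *
        ((4 + 16*M/t + 4*M^2/t^4)/(Whp' M t/t + 2*(Real.sqrt (Whp M t)/t)))) atTop
        (nhds (Real.sqrt 3 * ((4+0+0)/(2+2*1)))) :=
      tendsto_const_nhds.mul (hFnum.div hFden (by norm_num))
    have hG : Tendsto (fun t : ℝ => (6 + 12*M/t)/(1 + Real.sqrt (Whp M t)/t) - 4 - 6*M/t) atTop
        (nhds ((6+0)/(1+1) - 4 - 0)) :=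
      ((((tendsto_const_nhds (x := (6:ℝ))).add (hco1 (12*M))).div
        ((tendsto_const_nhds (x := (1:ℝ))).add hL2) (by norm_num)).sub
        (tendsto_const_nhds (x := (4:ℝ)))).sub (hco1 (6*M))
    have hFG : Tendsto (fun t : ℝ => Real.sqrt 3 *
        ((4 + 16*M/t + 4*M^2/t^4)/(Whp' M t/t + 2*(Real.sqrt (Whp M t)/t))) /
        ((6 + 12*M/t)/(1 + Real.sqrt (Whp M t)/t) - 4 - 6*M/t)) atTop
        (nhds (Real.sqrt 3 * ((4+0+0)/(2+2*1)) / ((6+0)/(1+1) - 4 - 0))) :=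
      hF.div hG (by norm_num : ((6+0)/(1+1) - 4 - 0 : ℝ) ≠ 0)
    rw [show Real.sqrt 3 * ((4+0+0)/(2+2*1)) / ((6+0)/(1+1) - 4 - 0) = -Real.sqrt 3 by norm_num [div_neg]]
      at hFG
    refine hFG.congr' ?_
    filter_upwards [eventually_gt_atTop (max tp (|M|+1))] with t ht
    have http : tp < t := lt_of_le_of_lt (le_max_left _ _) ht
    have htM : |M| + 1 < t := lt_of_le_of_lt (le_max_right _ _) ht
    have ht0 : 0 < t := lt_of_le_of_lt (by positivity : (0:ℝ) ≤ |M|+1) htM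
    have hW : 0 < Whp M t := hWpos t http
    have hu0 : 0 < Real.sqrt (Whp M t) := Real.sqrt_pos.2 hW
    have hu2 : Real.sqrt (Whp M t)^2 = Whp M t := Real.sq_sqrt hW.le
    have hW'pos : 0 < Whp' M t := by
      have h : Whp' M t = (2*t^3 + 2*M)/t^2 := by unfold Whp'; field_simp
      rw [h]
      refine div_pos ?_ (by positivity)
      nlinarith [neg_abs_le M, abs_nonneg M, mul_nonneg (mul_nonneg ht0.le ht0.le)
        (by linarith [abs_nonneg M] : (0:ℝ) ≤ t - 1)]
    set u := Real.sqrt (Whp M t) with hu_def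
    have hd1 : (0:ℝ) < Whp' M t/t + 2*(u/t) := by positivity
    have hd2 : (0:ℝ) < 1 + u/t := by positivity
    have hkey : (Whp' M t)^2 - 4*u^2 = 4 + 16*M/t + 4*M^2/t^4 := by
      rw [hu2]; unfold Whp Whp'; field_simp; ring
    have eqN : (4 + 16*M/t + 4*M^2/t^4) / (Whp' M t/t + 2*(u/t)) = t * (Whp' M t - 2*u) := by
      rw [eq_comm, eq_div_iff hd1.ne']
      have expand : t * (Whp' M t - 2*u) * (Whp' M t/t + 2*(u/t))
          = (Whp' M t)^2 - 4*u^2 := by field_simp; ring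
      rw [expand, hkey]
    have hkey2 : 6*t^2 - 6*u^2 = 6 + 12*M/t := by
      rw [hu2]; unfold Whp; field_simp; ring
    have eqG : (6 + 12*M/t)/(1 + u/t) = 6*t^2 - 6*t*u := by
      rw [eq_comm, eq_div_iff hd2.ne']
      have expand : (6*t^2 - 6*t*u)*(1 + u/t) = 6*t^2 - 6*u^2 := by field_simp; ring
      rw [expand, hkey2]
    show Real.sqrt 3 * ((4 + 16*M/t + 4*M^2/t^4)/(Whp' M t/t + 2*(u/t))) /
        ((6 + 12*M/t)/(1 + u/t) - 4 - 6*M/t) = thetaW M t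
    rw [eqN, eqG]
    unfold thetaW
    rw [← hu_def]
    rw [show (6*t^2 - 6*t*u - 4 - 6*M/t : ℝ) = 4 * Whp M t + t * Whp' M t - 6 * t * u from by
      unfold Whp Whp'; field_simp; ring,
      show Real.sqrt 3 * (t * (Whp' M t - 2*u)) = Real.sqrt 3 * t * (Whp' M t - 2*u) from by ring]
  -- Part 4
  have p4 : Tendsto (fun t : ℝ => betaW M t) atTop (nhds 0) := by
    have h4u : Tendsto (fun t : ℝ => 4*(Real.sqrt (Whp M t)/t)) atTop (nhds (4*1)) :=
      tendsto_const_nhds.mul hL2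
    have hquot : Tendsto (fun t : ℝ => (Whp' M t/t)/(4*(Real.sqrt (Whp M t)/t))) atTop
        (nhds (2/(4*1))) := hL3.div h4u (by norm_num : (4*1 : ℝ) ≠ 0)
    have hins : Tendsto (fun t : ℝ => (1/3 : ℝ) * (3/2 - Real.sqrt (Whp M t)/t
        - (Whp' M t/t)/(4*(Real.sqrt (Whp M t)/t)))) atTop
        (nhds ((1/3 : ℝ)*(3/2 - 1 - 2/(4*1)))) := tendsto_const_nhds.mul
      (((tendsto_const_nhds (x := (3/2:ℝ))).sub hL2).sub hquot)
    rw [show ((1/3:ℝ)*(3/2 - 1 - 2/(4*1))) = 0 by norm_num] at hins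
    refine hins.congr' ?_
    filter_upwards [eventually_gt_atTop (max tp 0)] with t ht
    have http : tp < t := lt_of_le_of_lt (le_max_left _ _) ht
    have ht0 : 0 < t := lt_of_le_of_lt (le_max_right _ _) ht
    have hu0 : 0 < Real.sqrt (Whp M t) := Real.sqrt_pos.2 (hWpos t http)
    have h : (Whp' M t/t)/(4*(Real.sqrt (Whp M t)/t)) = Whp' M t/(4*Real.sqrt (Whp M t)) := by
      rw [div_eq_div_iff (by positivity) (by positivity)]
      ring
    rw [show betaW M t = (1/3) * (3/2 - Real.sqrt (Whp M t)/t
      - Whp' M t / (4 * Real.sqrt (Whp M t))) from rfl, ← h]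
  exact ⟨p1, p2, p3, p4⟩
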